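/- arXiv:2509.12656 — 3 statements merged into one kernel-verified Lean document; each statement's English description precedes it below -/
import Mathlib

section
/- Let G be a group acting on a countably infinite set A with finitely many orbits on injective n-tuples for every n, and let a ∈ A. Then the number of orbits of the point stabilizer G_a on injective n-tuples is at most n·ℓ_n(G) + ℓ_{n+1}(G), and hence at most (n+1)·ℓ_{n+1}(G). -/
open MulAction Function Set

private lemma snoc_inj' {A : Type*} {n : ℕ} {f : Fin n → A} {a : A}
    (hf : Function.Injective f) (ha : ∀ i, f i ≠ a) :
    Function.Injective (Fin.snoc f a : Fin (n+1) → A) := by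
  intro i j hij
  induction i using Fin.lastCases with
  | last =>
    induction j using Fin.lastCases with
    | last => rfl
    | cast j => simp [Fin.snoc_last, Fin.snoc_castSucc] at hij
                exact absurd hij.symm (ha j)
  | cast i =>
    induction j using Fin.lastCases with
    | last => simp [Fin.snoc_last, Fin.snoc_castSucc] at hij
              exact absurd hij (ha i)
    | cast j => simp only [Fin.snoc_castSucc] at hij
                exact congrArg _ (hf hij)

/-- `ℓ_n(G)`: the number of orbits of `G` on injective `n`-tuples from `A`. -/
noncomputable def ellCard (G : Type*) [Group G] (A : Type*) [MulAction G A] (n : ℕ) : ℕ :=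
  Nat.card (Set.range fun f : {f : Fin n → A // Function.Injective f} => MulAction.orbit G f.1)

private lemma ell_stab_le (G A : Type*) [Group G] [MulAction G A] (a : A) (n : ℕ)
    (hfn : (Set.range fun f : {f : Fin n → A // Function.Injective f} =>
      MulAction.orbit G f.1).Finite)
    (hfn1 : (Set.range fun f : {f : Fin (n+1) → A // Function.Injective f} =>
      MulAction.orbit G f.1).Finite) :
    ellCard (MulAction.stabilizer G a) A n ≤ n * ellCard G A n + ellCard G A (n+1) := by
  classical
  set Ω : Set (Set (Fin n → A)) :=
    Set.range fun f : {f : Fin n → A // Function.Injective f} => MulAction.orbit G f.1 with hΩ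
  set Ω' : Set (Set (Fin (n+1) → A)) :=
    Set.range fun f : {f : Fin (n+1) → A // Function.Injective f} => MulAction.orbit G f.1 with hΩ'
  haveI : Finite Ω := hfn.to_subtype
  haveI : Finite Ω' := hfn1.to_subtype
  let F : {f : Fin n → A // Function.Injective f} → (Fin n × Ω) ⊕ Ω' := fun f =>
    if h : ∃ i, f.1 i = a then
      Sum.inl (h.choose, ⟨MulAction.orbit G f.1, ⟨f, rfl⟩⟩)
    else
      Sum.inr ⟨MulAction.orbit G (Fin.snoc f.1 a : Fin (n+1) → A),
        ⟨⟨(Fin.snoc f.1 a : Fin (n+1) → A), snoc_inj' f.2 (fun i hi => h ⟨i, hi⟩)⟩, rfl⟩⟩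
  have key : ∀ f f', F f = F f' →
      MulAction.orbit (MulAction.stabilizer G a) f.1
        = MulAction.orbit (MulAction.stabilizer G a) f'.1 := by
    intro f f' hFF
    by_cases h : ∃ i, f.1 i = a <;> by_cases h' : ∃ i, f'.1 i = a <;>
      simp only [F, h, h', dif_pos, dif_neg, not_false_iff, Sum.inl.injEq, Sum.inr.injEq,
        Prod.mk.injEq, Subtype.mk.injEq, reduceCtorEq] at hFF
    · obtain ⟨hi, horb⟩ := hFF
      have hmem : f'.1 ∈ MulAction.orbit G f.1 := by rw [show MulAction.orbit G f.1 = MulAction.orbit G f'.1 from congrArg Subtype.val horb]; exact MulAction.mem_orbit_self _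
      obtain ⟨g, hg⟩ := MulAction.mem_orbit_iff.mp hmem
      have hga : g ∈ MulAction.stabilizer G a := by
        have h1 := congrFun hg h.choose
        rw [Pi.smul_apply, h.choose_spec, hi, h'.choose_spec] at h1
        exact MulAction.mem_stabilizer_iff.mpr h1
      symm
      rw [MulAction.orbit_eq_iff]
      exact MulAction.mem_orbit_iff.mpr ⟨⟨g, hga⟩, hg⟩
    · have hmem : (Fin.snoc f'.1 a : Fin (n+1) → A)
          ∈ MulAction.orbit G (Fin.snoc f.1 a : Fin (n+1) → A) :=
        by rw [show MulAction.orbit G (Fin.snoc f.1 a : Fin (n+1) → A) = MulAction.orbit G (Fin.snoc f'.1 a : Fin (n+1) → A) from congrArg Subtype.val hFF]; exact MulAction.mem_orbit_self _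
      obtain ⟨g, hg⟩ := MulAction.mem_orbit_iff.mp hmem
      have hga : g ∈ MulAction.stabilizer G a := by
        have h1 := congrFun hg (Fin.last n)
        rw [Pi.smul_apply, Fin.snoc_last, Fin.snoc_last] at h1
        exact MulAction.mem_stabilizer_iff.mpr h1
      have hgf : g • f.1 = f'.1 := by
        funext j
        have h1 := congrFun hg (Fin.castSucc j)
        rw [Pi.smul_apply, Fin.snoc_castSucc, Fin.snoc_castSucc] at h1
        exact h1
      symm
      rw [MulAction.orbit_eq_iff]
      exact MulAction.mem_orbit_iff.mpr ⟨⟨g, hga⟩, hgf⟩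
  let Φ : (Set.range fun f : {f : Fin n → A // Function.Injective f} =>
      MulAction.orbit (MulAction.stabilizer G a) f.1) → (Fin n × Ω) ⊕ Ω' :=
    fun S => F S.2.choose
  have hΦ : Function.Injective Φ := by
    intro S S' hSS
    have h1 := key _ _ hSS
    have e1 : MulAction.orbit (MulAction.stabilizer G a) (S.2.choose).1
        = (S : Set (Fin n → A)) := S.2.choose_spec
    have e2 : MulAction.orbit (MulAction.stabilizer G a) (S'.2.choose).1
        = (S' : Set (Fin n → A)) := S'.2.choose_spec
    exact Subtype.ext (e1 ▸ e2 ▸ h1)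
  calc ellCard (MulAction.stabilizer G a) A n
      ≤ Nat.card ((Fin n × Ω) ⊕ Ω') := Nat.card_le_card_of_injective Φ hΦ
    _ = n * ellCard G A n + ellCard G A (n+1) := by
        rw [Nat.card_sum, Nat.card_prod, Nat.card_eq_fintype_card, Fintype.card_fin]
        rfl

private lemma ell_mono (G A : Type*) [Group G] [MulAction G A] [Infinite A] (n : ℕ)
    (hfn1 : (Set.range fun f : {f : Fin (n+1) → A // Function.Injective f} =>
      MulAction.orbit G f.1).Finite) :
    ellCard G A n ≤ ellCard G A (n+1) := by
  classical
  haveI : Finite ↥(Set.range fun f : {f : Fin (n+1) → A // Function.Injective f} =>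
      MulAction.orbit G f.1) := hfn1.to_subtype
  let Ψ : (Set.range fun f : {f : Fin (n+1) → A // Function.Injective f} =>
        MulAction.orbit G f.1) →
      (Set.range fun f : {f : Fin n → A // Function.Injective f} => MulAction.orbit G f.1) :=
    fun S => ⟨MulAction.orbit G (S.2.choose.1 ∘ Fin.castSucc),
      ⟨⟨S.2.choose.1 ∘ Fin.castSucc, S.2.choose.2.comp (Fin.castSucc_injective n)⟩, rfl⟩⟩
  apply Nat.card_le_card_of_surjective Ψ
  rintro ⟨T, h, hh⟩
  obtain ⟨b, hb⟩ := (Set.finite_range h.1).infinite_compl.nonempty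
  have hbr : ∀ i, h.1 i ≠ b := fun i hi => hb ⟨i, hi⟩
  let f' : {f : Fin (n+1) → A // Function.Injective f} :=
    ⟨(Fin.snoc h.1 b : Fin (n+1) → A), snoc_inj' h.2 hbr⟩
  set S : ↥(Set.range fun f : {f : Fin (n+1) → A // Function.Injective f} =>
      MulAction.orbit G f.1) := ⟨MulAction.orbit G f'.1, ⟨f', rfl⟩⟩ with hS
  have hrep : MulAction.orbit G (S.2.choose).1 = MulAction.orbit G f'.1 := S.2.choose_spec
  have hmem : (S.2.choose).1 ∈ MulAction.orbit G f'.1 :=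
    hrep ▸ MulAction.mem_orbit_self _
  obtain ⟨g, hg⟩ := MulAction.mem_orbit_iff.mp hmem
  have hcomp : (S.2.choose).1 ∘ Fin.castSucc = g • h.1 := by
    funext j
    have h1 := congrFun hg (Fin.castSucc j)
    rw [Pi.smul_apply] at h1
    show (S.2.choose).1 (Fin.castSucc j) = g • h.1 j
    rw [← h1]
    have h2 : f'.1 (Fin.castSucc j) = h.1 j := by
      show (Fin.snoc h.1 b : Fin (n+1) → A) (Fin.castSucc j) = h.1 j
      simp
    rw [h2]
  refine ⟨S, Subtype.ext ?_⟩
  show MulAction.orbit G ((S.2.choose).1 ∘ Fin.castSucc) = T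
  rw [hcomp, MulAction.orbit_smul]
  exact hh

/-- For a group `G` acting on a countably infinite set `A` with finitely many orbits
on injective `n`-tuples for every `n`, and `a ∈ A`, the point stabilizer `G_a` satisfies
`ℓ_n(G_a) ≤ n·ℓ_n(G) + ℓ_{n+1}(G) ≤ (n+1)·ℓ_{n+1}(G)`. -/
theorem stmt3 (G A : Type*) [Group G] [MulAction G A] [Countable A] [Infinite A]
    (hfin : ∀ n : ℕ,
      (Set.range fun f : {f : Fin n → A // Function.Injective f} =>
        MulAction.orbit G f.1).Finite)
    (a : A) (n : ℕ) :
    ellCard (MulAction.stabilizer G a) A n ≤ n * ellCard G A n + ellCard G A (n + 1) ∧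
    ellCard (MulAction.stabilizer G a) A n ≤ (n + 1) * ellCard G A (n + 1) := by
  have h1 := ell_stab_le G A a n (hfin n) (hfin (n+1))
  have h2 := ell_mono G A n (hfin (n+1))
  refine ⟨h1, h1.trans ?_⟩
  calc n * ellCard G A n + ellCard G A (n+1)
      ≤ n * ellCard G A (n+1) + ellCard G A (n+1) :=
        Nat.add_le_add_right (Nat.mul_le_mul_left n h2) _
    _ = (n+1) * ellCard G A (n+1) := by ring
end

section
/- Let G be a group acting on a countably infinite set A with finitely many orbits on injective n-tuples, and let F ⊆ A be finite. Then for all n > |F|, ℓ_n(G) ≥ ℓ_{n-|F|}(G_F) / (n·(n-1)·…·(n-|F|+1)), where G_F is the pointwise stabilizer of F. -/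
open MulAction

/-- Snoc of an injective tuple with a fresh element is injective. -/
lemma snoc_injective {A : Type*} {m : ℕ} {f : Fin m → A} {c : A}
    (hf : Function.Injective f) (hc : c ∉ Set.range f) :
    Function.Injective (Fin.snoc f c : Fin (m + 1) → A) := by
  intro x y h
  rcases Fin.eq_castSucc_or_eq_last x with ⟨i, rfl⟩ | rfl <;>
    rcases Fin.eq_castSucc_or_eq_last y with ⟨j, rfl⟩ | rfl
  · simp only [Fin.snoc_castSucc] at h
    exact congrArg _ (hf h)
  · simp only [Fin.snoc_castSucc, Fin.snoc_last] at h
    exact absurd ⟨i, h⟩ hc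
  · simp only [Fin.snoc_castSucc, Fin.snoc_last] at h
    exact absurd ⟨j, h.symm⟩ hc
  · rfl

/-- If two group actions on `A` have the same orbits pointwise, the ranges of the
orbit maps agree. -/
lemma range_orbit_congr {G₁ G₂ A : Type*} [Group G₁] [Group G₂]
    [MulAction G₁ A] [MulAction G₂ A] {m : ℕ}
    (h : ∀ x : Fin m → A, MulAction.orbit G₁ x = MulAction.orbit G₂ x) :
    (Set.range fun f : {f : Fin m → A // Function.Injective f} => MulAction.orbit G₁ f.1)
      = Set.range fun f : {f : Fin m → A // Function.Injective f} =>
          MulAction.orbit G₂ f.1 := by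
  simp only [h]

/-- Key lemma: `ℓ_m(G_a) ≤ (m+1) ℓ_{m+1}(G)`, together with finiteness. -/
lemma key_lemma {G A : Type*} [Group G] [MulAction G A] [Infinite A] (a : A) (m : ℕ)
    (hT : (Set.range fun f : {f : Fin (m + 1) → A // Function.Injective f} =>
      MulAction.orbit G f.1).Finite) :
    (Set.range fun f : {f : Fin m → A // Function.Injective f} =>
      MulAction.orbit ↥(MulAction.stabilizer G a) f.1).Finite ∧
    Nat.card (Set.range fun f : {f : Fin m → A // Function.Injective f} =>
      MulAction.orbit ↥(MulAction.stabilizer G a) f.1) ≤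
      (m + 1) * Nat.card (Set.range fun f : {f : Fin (m + 1) → A // Function.Injective f} =>
        MulAction.orbit G f.1) := by
  classical
  set T := Set.range fun f : {f : Fin (m + 1) → A // Function.Injective f} =>
    MulAction.orbit G f.1 with hTdef
  set S := Set.range fun f : {f : Fin m → A // Function.Injective f} =>
    MulAction.orbit ↥(MulAction.stabilizer G a) f.1 with hSdef
  -- extend each injective m-tuple to an injective (m+1)-tuple carrying `a` at a known spot
  have hext : ∀ f : {f : Fin m → A // Function.Injective f},
      ∃ (g : {g : Fin (m + 1) → A // Function.Injective g}) (i : Fin (m + 1)),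
        g.1 i = a ∧ ∀ j : Fin m, g.1 (Fin.castSucc j) = f.1 j := by
    rintro ⟨f, hf⟩
    by_cases h : ∃ i, f i = a
    · obtain ⟨i, hi⟩ := h
      have hfin : (Set.range f ∪ {a}).Finite :=
        (Set.finite_range f).union (Set.finite_singleton a)
      obtain ⟨b, hb⟩ := hfin.infinite_compl.nonempty
      have hb' : b ∉ Set.range f := fun hb' => hb (Or.inl hb')
      refine ⟨⟨Fin.snoc f b, snoc_injective hf hb'⟩, Fin.castSucc i, ?_, ?_⟩
      · simp [hi]
      · intro j; simp
    · push_neg at h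
      have ha' : a ∉ Set.range f := by rintro ⟨i, hi⟩; exact h i hi
      refine ⟨⟨Fin.snoc f a, snoc_injective hf ha'⟩, Fin.last m, ?_, ?_⟩
      · simp
      · intro j; simp
  choose ext pos hpos hcast using hext
  -- choose representatives of elements of S
  have hrep : ∀ s : S, ∃ f : {f : Fin m → A // Function.Injective f},
      MulAction.orbit ↥(MulAction.stabilizer G a) f.1 = s.1 := fun s => s.2
  choose rep hrepeq using hrep
  -- the injection
  let Φ : S → Fin (m + 1) × T := fun s =>
    (pos (rep s), ⟨MulAction.orbit G (ext (rep s)).1, ⟨ext (rep s), rfl⟩⟩)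
  have hΦ : Function.Injective Φ := by
    intro s s' h
    have h1 : pos (rep s) = pos (rep s') := (Prod.ext_iff.mp h).1
    have h2 : MulAction.orbit G (ext (rep s)).1 = MulAction.orbit G (ext (rep s')).1 :=
      Subtype.ext_iff.mp (Prod.ext_iff.mp h).2
    have hmem : (ext (rep s')).1 ∈ MulAction.orbit G (ext (rep s)).1 := by
      rw [h2]; exact MulAction.mem_orbit_self _
    obtain ⟨g, hg⟩ := hmem
    replace hg : g • (ext (rep s)).1 = (ext (rep s')).1 := hg
    have hga : g • a = a := by
      have h3 := congrFun hg (pos (rep s'))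
      rw [Pi.smul_apply] at h3
      rw [hpos (rep s')] at h3
      rw [← h1, hpos (rep s)] at h3
      exact h3
    have hgf : (⟨g, hga⟩ : MulAction.stabilizer G a) • (rep s).1 = (rep s').1 := by
      funext j
      have h4 := congrFun hg (Fin.castSucc j)
      rw [Pi.smul_apply, hcast (rep s) j, hcast (rep s') j] at h4
      exact h4
    have horb : MulAction.orbit ↥(MulAction.stabilizer G a) (rep s').1 =
        MulAction.orbit ↥(MulAction.stabilizer G a) (rep s).1 := by
      rw [MulAction.orbit_eq_iff]
      exact ⟨⟨g, hga⟩, hgf⟩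
    apply Subtype.ext
    rw [← hrepeq s, ← hrepeq s', horb]
  have hTfin : Finite T := hT
  have hSfin : Finite S := Finite.of_injective Φ hΦ
  refine ⟨Set.finite_coe_iff.mp hSfin, ?_⟩
  calc Nat.card S ≤ Nat.card (Fin (m + 1) × T) := Nat.card_le_card_of_injective Φ hΦ
    _ = (m + 1) * Nat.card T := by
        rw [Nat.card_prod, Nat.card_eq_fintype_card, Fintype.card_fin]

/-- Main induction on the finite set `F`. -/
lemma main_lemma {G A : Type*} [Group G] [MulAction G A] [Infinite A]
    (hfin : ∀ n : ℕ,
      (Set.range fun f : {f : Fin n → A // Function.Injective f} =>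
        MulAction.orbit G f.1).Finite)
    (F : Finset A) : ∀ n : ℕ, F.card ≤ n →
    (Set.range fun f : {f : Fin (n - F.card) → A // Function.Injective f} =>
      MulAction.orbit ↥((⨅ a ∈ F, MulAction.stabilizer G a : Subgroup G)) f.1).Finite ∧
    Nat.card (Set.range fun f : {f : Fin (n - F.card) → A // Function.Injective f} =>
      MulAction.orbit ↥((⨅ a ∈ F, MulAction.stabilizer G a : Subgroup G)) f.1) ≤
      Nat.descFactorial n F.card *
        Nat.card (Set.range fun f : {f : Fin n → A // Function.Injective f} =>
          MulAction.orbit G f.1) := by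
  classical
  induction F using Finset.induction_on with
  | empty =>
    intro n _
    have horb : ∀ x : Fin n → A,
        MulAction.orbit ↥((⨅ a ∈ (∅ : Finset A), MulAction.stabilizer G a : Subgroup G)) x
          = MulAction.orbit G x := by
      intro x
      ext y
      constructor
      · rintro ⟨⟨g, _⟩, rfl⟩; exact ⟨g, rfl⟩
      · rintro ⟨g, rfl⟩
        exact ⟨⟨g, by simp⟩, rfl⟩
    simp only [Finset.card_empty, Nat.sub_zero, Nat.descFactorial_zero, one_mul]
    show (Set.range fun f : {f : Fin n → A // Function.Injective f} =>
        MulAction.orbit ↥((⨅ a ∈ (∅ : Finset A), MulAction.stabilizer G a : Subgroup G)) f.1).Finite ∧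
      Nat.card (Set.range fun f : {f : Fin n → A // Function.Injective f} =>
        MulAction.orbit ↥((⨅ a ∈ (∅ : Finset A), MulAction.stabilizer G a : Subgroup G)) f.1) ≤
      Nat.card (Set.range fun f : {f : Fin n → A // Function.Injective f} => MulAction.orbit G f.1)
    rw [range_orbit_congr horb]
    exact ⟨hfin n, le_refl _⟩
  | @insert a s ha ih =>
    intro n hn
    rw [Finset.card_insert_of_notMem ha] at hn ⊢
    obtain ⟨m, hm⟩ : ∃ m, n - s.card = m + 1 := ⟨n - (s.card + 1), by omega⟩
    have hms : n - (s.card + 1) = m := by omega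
    rw [hms]
    have ihs := ih n (by omega)
    rw [hm] at ihs
    set K := (⨅ b ∈ s, MulAction.stabilizer G b : Subgroup G) with hK
    have hkey := key_lemma (G := ↥K) a m ihs.1
    have hins : (⨅ b ∈ insert a s, MulAction.stabilizer G b : Subgroup G)
        = MulAction.stabilizer G a ⊓ K := Finset.iInf_insert a s _
    have horb : ∀ x : Fin m → A,
        MulAction.orbit ↥(MulAction.stabilizer ↥K a) x =
        MulAction.orbit ↥((⨅ b ∈ insert a s, MulAction.stabilizer G b : Subgroup G)) x := by
      intro x
      ext y
      constructor
      · rintro ⟨⟨⟨g, hgK⟩, hga⟩, rfl⟩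
        refine ⟨⟨g, ?_⟩, rfl⟩
        rw [hins]
        exact Subgroup.mem_inf.mpr ⟨hga, hgK⟩
      · rintro ⟨⟨g, hg⟩, rfl⟩
        rw [hins] at hg
        obtain ⟨hga, hgK⟩ := Subgroup.mem_inf.mp hg
        exact ⟨⟨⟨g, hgK⟩, hga⟩, rfl⟩
    rw [← range_orbit_congr horb]
    refine ⟨hkey.1, ?_⟩
    calc Nat.card _ ≤ (m + 1) * Nat.card
          (Set.range fun f : {f : Fin (m + 1) → A // Function.Injective f} =>
            MulAction.orbit ↥K f.1) := hkey.2
      _ ≤ (m + 1) * (Nat.descFactorial n s.card *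
          Nat.card (Set.range fun f : {f : Fin n → A // Function.Injective f} =>
            MulAction.orbit G f.1)) := Nat.mul_le_mul_left _ ihs.2
      _ = Nat.descFactorial n (s.card + 1) *
          Nat.card (Set.range fun f : {f : Fin n → A // Function.Injective f} =>
            MulAction.orbit G f.1) := by
          rw [Nat.descFactorial_succ]
          have : n - s.card = m + 1 := hm
          rw [this]
          ring

/-- For a group `G` acting on a countably infinite set `A` with finitely many orbits on
injective `n`-tuples, and a finite `F ⊆ A`, for all `n > |F|` we have
`ℓ_n(G) ≥ ℓ_{n-|F|}(G_F) / (n·(n-1)⋯(n-|F|+1))`, where `G_F` is the pointwise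
stabilizer of `F`; equivalently `n·(n-1)⋯(n-|F|+1) · ℓ_n(G) ≥ ℓ_{n-|F|}(G_F)`. -/
theorem stmt4 (G A : Type*) [Group G] [MulAction G A] [Countable A] [Infinite A]
    (hfin : ∀ n : ℕ,
      (Set.range fun f : {f : Fin n → A // Function.Injective f} =>
        MulAction.orbit G f.1).Finite)
    (F : Finset A) (n : ℕ) (hn : F.card < n) :
    ellCard ↥((⨅ a ∈ F, MulAction.stabilizer G a : Subgroup G)) A (n - F.card) ≤
      Nat.descFactorial n F.card * ellCard G A n := by
  exact (main_lemma hfin F n hn.le).2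
end

section
/- Let C be a hereditary class of finite graphs that contains, for every k, a graph in which the half-graph of order k is semi-induced. Then for every ε > 0 and all sufficiently large n, the number of labelled graphs in C on vertex set {1,...,n} is greater than n!/(2+ε)^n. -/
open Nat


lemma indep_of_matching {α : Type*} [DecidableEq α] (R : α → α → Prop)
    (hirr : ∀ p, ¬ R p p)
    (h1 : ∀ p q q', R p q → R p q' → q = q')
    (h2 : ∀ p q q', R q p → R q' p → q = q') :
    ∀ (m : ℕ) (T : Finset α), 3 * m ≤ T.card →
      ∃ S ⊆ T, S.card = m ∧ ∀ p ∈ S, ∀ q ∈ S, ¬ R p q := by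
  classical
  intro m
  induction m with
  | zero => exact fun T _ => ⟨∅, by simp⟩
  | succ m ih =>
    intro T hT
    obtain ⟨p, hp⟩ : T.Nonempty := Finset.card_pos.mp (by omega)
    set T' := T.filter (fun x => x ≠ p ∧ ¬ R p x ∧ ¬ R x p) with hT'def
    have hT'sub : T' ⊆ T := Finset.filter_subset _ _
    set c1 : α := if h : ∃ q, R p q then h.choose else p with hc1
    set c2 : α := if h : ∃ q, R q p then h.choose else p with hc2
    have hsdiff : T \ T' ⊆ {p, c1, c2} := by
      intro x hx
      rw [Finset.mem_sdiff] at hx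
      obtain ⟨hxT, hxT'⟩ := hx
      rw [hT'def, Finset.mem_filter] at hxT'
      push_neg at hxT'
      simp only [Finset.mem_insert, Finset.mem_singleton]
      by_cases hxp : x = p
      · exact Or.inl hxp
      rcases Classical.em (R p x) with hR | hR
      · refine Or.inr (Or.inl ?_)
        have hex : ∃ q, R p q := ⟨x, hR⟩
        rw [hc1, dif_pos hex]
        exact h1 p x _ hR hex.choose_spec
      · have hR2 : R x p := hxT' hxT hxp hR
        refine Or.inr (Or.inr ?_)
        have hex : ∃ q, R q p := ⟨x, hR2⟩
        rw [hc2, dif_pos hex]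
        exact h2 p x _ hR2 hex.choose_spec
    have hcard3 : (T \ T').card ≤ 3 := by
      refine (Finset.card_le_card hsdiff).trans ?_
      refine (Finset.card_insert_le _ _).trans ?_
      have := Finset.card_insert_le c1 ({c2} : Finset α)
      simp only [Finset.card_singleton] at this ⊢
      omega
    have hcardT' : 3 * m ≤ T'.card := by
      have := Finset.card_sdiff_add_card_eq_card hT'sub
      omega
    obtain ⟨S', hS'sub, hS'card, hS'ind⟩ := ih T' hcardT'
    have hpS' : p ∉ S' := by
      intro h
      have := hS'sub h
      rw [hT'def, Finset.mem_filter] at this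
      exact this.2.1 rfl
    refine ⟨insert p S', ?_, ?_, ?_⟩
    · intro x hx
      rcases Finset.mem_insert.mp hx with h | h
      · exact h ▸ hp
      · exact hT'sub (hS'sub h)
    · rw [Finset.card_insert_of_notMem hpS', hS'card]
    · intro x hx y hy
      rcases Finset.mem_insert.mp hx with hx' | hx' <;>
        rcases Finset.mem_insert.mp hy with hy' | hy'
      · rw [hx', hy']; exact hirr p
      · rw [hx']
        have := hS'sub hy'
        rw [hT'def, Finset.mem_filter] at this
        exact this.2.2.1
      · rw [hy']
        have := hS'sub hx'
        rw [hT'def, Finset.mem_filter] at this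
        exact this.2.2.2
      · exact hS'ind x hx' y hy'

lemma perm_lt_of_cross {n : ℕ} (π σ : Equiv.Perm (Fin n))
    (hpar : ∀ i, ((π i : ℕ) % 2 = 0 ↔ (σ i : ℕ) % 2 = 0))
    (hcross : ∀ i j, (π i : ℕ) % 2 = 0 → (π j : ℕ) % 2 ≠ 0 →
      (π i ≤ π j ↔ σ i ≤ σ j)) :
    ∀ i j, π i < π j → σ i < σ j := by
  intro i j hij
  have hne : i ≠ j := fun h => by simp [h] at hij
  have hsne : σ i ≠ σ j := fun h => hne (σ.injective h)
  by_cases hpi : (π i : ℕ) % 2 = 0 <;> by_cases hpj : (π j : ℕ) % 2 = 0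
  · -- both even
    have hlt : (π i : ℕ) + 1 < (π j : ℕ) := by
      have := Fin.lt_def.mp hij; omega
    have htlt : (π i : ℕ) + 1 < n := lt_trans hlt (π j).isLt
    set t : Fin n := ⟨(π i : ℕ) + 1, htlt⟩ with ht
    set jj := π.symm t with hjj
    have hπjj : π jj = t := π.apply_symm_apply t
    have hoddjj : (π jj : ℕ) % 2 ≠ 0 := by rw [hπjj]; simp [ht]; omega
    have h1 : σ i ≤ σ jj := by
      rw [← hcross i jj hpi hoddjj]
      rw [Fin.le_def, hπjj]; simp [ht]
    have h2 : σ jj < σ j := by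
      have : ¬ (π j ≤ π jj) := by
        rw [Fin.le_def, hπjj]; simp [ht]; omega
      rw [hcross j jj hpj hoddjj] at this
      exact not_le.mp this
    exact lt_of_le_of_lt h1 h2
  · -- π i even, π j odd
    have := (hcross i j hpi hpj).mp (le_of_lt hij)
    exact lt_of_le_of_ne this hsne
  · -- π i odd, π j even
    have h := hcross j i hpj hpi
    have : ¬ (π j ≤ π i) := not_le.mpr hij
    rw [h] at this
    exact not_le.mp this
  · -- both odd
    have hlt : (π i : ℕ) + 1 < (π j : ℕ) := by
      have := Fin.lt_def.mp hij; omega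
    have htlt : (π i : ℕ) + 1 < n := lt_trans hlt (π j).isLt
    set t : Fin n := ⟨(π i : ℕ) + 1, htlt⟩ with ht
    set jj := π.symm t with hjj
    have hπjj : π jj = t := π.apply_symm_apply t
    have hevjj : (π jj : ℕ) % 2 = 0 := by rw [hπjj]; simp [ht]; omega
    have h1 : σ i < σ jj := by
      have : ¬ (π jj ≤ π i) := by
        rw [Fin.le_def, hπjj]; simp [ht]
      rw [hcross jj i hevjj hpi] at this
      exact not_le.mp this
    have h2 : σ jj ≤ σ j := by
      rw [← hcross jj j hevjj hpj]
      rw [Fin.le_def, hπjj]; simp [ht]; omega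
    exact lt_of_lt_of_le h1 h2

lemma perm_eq_of_cross {n : ℕ} (π σ : Equiv.Perm (Fin n))
    (hpar : ∀ i, ((π i : ℕ) % 2 = 0 ↔ (σ i : ℕ) % 2 = 0))
    (hcross : ∀ i j, (π i : ℕ) % 2 = 0 → (π j : ℕ) % 2 ≠ 0 →
      (π i ≤ π j ↔ σ i ≤ σ j)) : π = σ := by
  have h1 := perm_lt_of_cross π σ hpar hcross
  have h2 := perm_lt_of_cross σ π (fun i => (hpar i).symm)
    (fun i j hi hj => by
      exact (hcross i j ((hpar i).mpr hi) (fun h => hj ((hpar j).mp h))).symm)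
  have hu : StrictMono (fun x => σ (π.symm x)) := by
    intro x y hxy
    exact h1 (π.symm x) (π.symm y) (by simpa using hxy)
  have hid : (fun x => σ (π.symm x)) = id := by
    have hr : Set.range (fun x => σ (π.symm x)) = Set.range (id : Fin n → Fin n) := by
      rw [Set.range_id]
      exact Set.range_eq_univ.mpr fun y => ⟨π (σ.symm y), by simp⟩
    have hwf : WellFoundedLT (Fin n) := inferInstance
    exact (@StrictMono.range_inj (Fin n) (Fin n) _ _ hwf _ _ hu strictMono_id).mp hr
  ext i
  have h3 : σ (π.symm (π i)) = π i := congrFun hid (π i)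
  rw [Equiv.symm_apply_apply] at h3
  rw [h3]
/-- A hereditary class of finite graphs containing arbitrarily large semi-induced
half-graphs has labelled growth rate exceeding `n!/(2+ε)ⁿ` for every `ε > 0`. -/
theorem stmt6 (C : ∀ n : ℕ, Set (SimpleGraph (Fin n)))
    (hHer : ∀ (n m : ℕ) (f : Fin m → Fin n), Function.Injective f →
      ∀ G ∈ C n, SimpleGraph.comap f G ∈ C m)
    (hHalf : ∀ k : ℕ, ∃ (n : ℕ) (G : SimpleGraph (Fin n)), G ∈ C n ∧
      ∃ a b : Fin k → Fin n, ∀ i j : Fin k, G.Adj (a i) (b j) ↔ i ≤ j)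
    (ε : ℝ) (hε : 0 < ε) :
    ∃ N : ℕ, ∀ n : ℕ, N ≤ n → ((n ! : ℝ)) / (2 + ε) ^ n < Nat.card (C n) := by
  classical
  refine ⟨1, fun n hn => ?_⟩
  obtain ⟨M, G, hG, a, b, hab⟩ := hHalf (3 * n)
  -- injectivity of a and b
  have ha_inj : Function.Injective a := by
    intro i j hij
    have h1 : i ≤ j := (hab i j).mp (by rw [hij]; exact (hab j j).mpr le_rfl)
    have h2 : j ≤ i := (hab j i).mp (by rw [← hij]; exact (hab i i).mpr le_rfl)
    exact le_antisymm h1 h2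
  have hb_inj : Function.Injective b := by
    intro i j hij
    have h1 : i ≤ j := by
      have := (hab i i).mpr le_rfl
      rw [hij] at this
      exact (hab i j).mp this
    have h2 : j ≤ i := by
      have := (hab j j).mpr le_rfl
      rw [← hij] at this
      exact (hab j i).mp this
    exact le_antisymm h1 h2
  -- independent set avoiding a p = b q collisions
  obtain ⟨S, hSsub, hScard, hSind⟩ :=
    indep_of_matching (fun p q => a p = b q)
      (fun p h => ((hab p p).mpr le_rfl).ne h)
      (fun p q q' h h' => hb_inj (h ▸ h'))
      (fun p q q' h h' => ha_inj (h.trans h'.symm))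
      n (Finset.univ : Finset (Fin (3 * n))) (by simp)
  set e := S.orderIsoOfFin hScard with he
  set A : Fin n → Fin M := fun i => a (e i) with hA
  set B : Fin n → Fin M := fun j => b (e j) with hB
  have hcross : ∀ i j, G.Adj (A i) (B j) ↔ i ≤ j := by
    intro i j
    rw [hA, hB]
    simp only []
    rw [hab]
    constructor
    · intro h
      exact e.le_iff_le.mp h
    · intro h
      exact e.le_iff_le.mpr h
  have hABne : ∀ i j, A i ≠ B j := by
    intro i j h
    exact hSind (e i) (e i).2 (e j) (e j).2 h
  have hA_inj : Function.Injective A := by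
    intro i j h
    have := ha_inj h
    exact e.injective (Subtype.ext this)
  have hB_inj : Function.Injective B := by
    intro i j h
    have := hb_inj h
    exact e.injective (Subtype.ext this)
  -- the graph family
  set f : Equiv.Perm (Fin n) → Fin n → Fin M :=
    fun π i => if (π i : ℕ) % 2 = 0 then A (π i) else B (π i) with hf
  have hf_inj : ∀ π, Function.Injective (f π) := by
    intro π i j h
    rw [hf] at h
    simp only [] at h
    by_cases hi : (π i : ℕ) % 2 = 0 <;> by_cases hj : (π j : ℕ) % 2 = 0
    · rw [if_pos hi, if_pos hj] at h; exact π.injective (hA_inj h)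
    · rw [if_pos hi, if_neg hj] at h; exact absurd h (hABne _ _)
    · rw [if_neg hi, if_pos hj] at h; exact absurd h.symm (hABne _ _)
    · rw [if_neg hi, if_neg hj] at h; exact π.injective (hB_inj h)
  set Gr : Equiv.Perm (Fin n) → SimpleGraph (Fin n) :=
    fun π => SimpleGraph.comap (f π) G with hGr
  have hGrmem : ∀ π, Gr π ∈ C n := fun π => hHer M n (f π) (hf_inj π) G hG
  set s : Equiv.Perm (Fin n) → Fin n → Bool :=
    fun π i => decide ((π i : ℕ) % 2 = 0) with hs
  set Ψ : Equiv.Perm (Fin n) → ↥(C n) × (Fin n → Bool) :=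
    fun π => (⟨Gr π, hGrmem π⟩, s π) with hΨ
  have hΨ_inj : Function.Injective Ψ := by
    intro π σ h
    rw [hΨ, Prod.mk.injEq, Subtype.mk.injEq] at h
    obtain ⟨hGeq, hseq⟩ := h
    have hpar : ∀ i, ((π i : ℕ) % 2 = 0 ↔ (σ i : ℕ) % 2 = 0) := by
      intro i
      have := congrFun hseq i
      rw [hs] at this
      simpa using this
    refine perm_eq_of_cross π σ hpar ?_
    intro i j hi hj
    have h1 : (Gr π).Adj i j ↔ π i ≤ π j := by
      rw [hGr]
      simp only [SimpleGraph.comap_adj, hf]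
      rw [if_pos hi, if_neg hj]
      exact hcross _ _
    have h2 : (Gr σ).Adj i j ↔ σ i ≤ σ j := by
      rw [hGr]
      simp only [SimpleGraph.comap_adj, hf]
      rw [if_pos ((hpar i).mp hi), if_neg (fun h => hj ((hpar j).mpr h))]
      exact hcross _ _
    rw [← h1, ← h2, hGeq]
  -- counting
  have hcount : n ! ≤ Nat.card (C n) * 2 ^ n := by
    have hle := Nat.card_le_card_of_injective Ψ hΨ_inj
    rw [Nat.card_prod] at hle
    have h1 : Nat.card (Equiv.Perm (Fin n)) = n ! := by
      rw [Nat.card_eq_fintype_card, Fintype.card_perm, Fintype.card_fin]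
    have h2 : Nat.card (Fin n → Bool) = 2 ^ n := by
      rw [Nat.card_fun, Nat.card_eq_fintype_card, Nat.card_eq_fintype_card]
      simp
    rw [h1, h2] at hle
    exact hle
  -- numerics
  have hpos : 0 < Nat.card (C n) := by
    rcases Nat.eq_zero_or_pos (Nat.card (C n)) with h | h
    · rw [h, zero_mul] at hcount
      exact absurd (Nat.le_zero.mp hcount) (Nat.factorial_pos n).ne'
    · exact h
  have hc0 : (0:ℝ) < (Nat.card (C n) : ℝ) := by exact_mod_cast hpos
  have hb : (0:ℝ) < (2 + ε) ^ n := by positivity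
  rw [div_lt_iff₀ hb]
  have hstep1 : (n ! : ℝ) ≤ (Nat.card (C n) : ℝ) * 2 ^ n := by
    have : ((n ! : ℕ) : ℝ) ≤ ((Nat.card (C n) * 2 ^ n : ℕ) : ℝ) := by
      exact_mod_cast hcount
    simpa [Nat.cast_mul, Nat.cast_pow] using this
  refine lt_of_le_of_lt hstep1 ?_
  have hlt : (2:ℝ) ^ n < (2 + ε) ^ n := by
    apply pow_lt_pow_left₀ (by linarith) (by norm_num)
    omega
  exact (mul_lt_mul_iff_right₀ hc0).mpr hlt
end
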